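/- Let p be an odd prime. Consider the action of the group Γ = (Z/p)^* × Z/p × Z/p × (Z/p^2)^* (parametrizing automorphisms of Z/p^2 × Z/p by (l,j,k,i)) on Z/p ⊕ Z/p ⊕ Z/p^2 = ⟨u^2⟩ ⊕ ⟨uv⟩ ⊕ ⟨v^2⟩ given by u^2 ↦ l^2 u^2, uv ↦ lk u^2 + il uv + pij v^2, v^2 ↦ k^2 u^2 + 2ik uv + i^2 v^2 (extended linearly). Then this action has exactly 16 orbits. -/

import Mathlib

/-- The action of an automorphism of `Z/p² × Z/p` with parameters
`(l, j, k, i) ∈ (Z/p)ˣ × Z/p × Z/p × (Z/p²)ˣ` on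
`H⁴(Z/p² × Z/p, Z) ≅ Z/p⟨u²⟩ ⊕ Z/p⟨uv⟩ ⊕ Z/p²⟨v²⟩`, determined by
`u² ↦ l²u²`, `uv ↦ lk u² + il uv + pij v²`, `v² ↦ k² u² + 2ik uv + i² v²`
and extended additively.  An element is recorded as `(x, y, z)` with `x, y` the
coefficients of `u²`, `uv` and `z` that of `v²`. -/
def H4act (p : ℕ) (l : (ZMod p)ˣ) (j k : ZMod p) (i : (ZMod (p ^ 2))ˣ)
    (m : ZMod p × ZMod p × ZMod (p ^ 2)) : ZMod p × ZMod p × ZMod (p ^ 2) :=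
  ( (l : ZMod p) ^ 2 * m.1 + (l : ZMod p) * k * m.2.1
      + k ^ 2 * ((m.2.2.val : ZMod p)),
    ((i : ZMod (p ^ 2)).val : ZMod p) * (l : ZMod p) * m.2.1
      + 2 * ((i : ZMod (p ^ 2)).val : ZMod p) * k * ((m.2.2.val : ZMod p)),
    (p : ZMod (p ^ 2)) * (i : ZMod (p ^ 2)) * (j.val : ZMod (p ^ 2))
        * (m.2.1.val : ZMod (p ^ 2))
      + (i : ZMod (p ^ 2)) ^ 2 * m.2.2 )

set_option linter.unusedSectionVars false
set_option linter.unusedVariables false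

namespace H4aux

variable (p : ℕ)

/-- Reduction mod `p`. -/
def red (z : ZMod (p ^ 2)) : ZMod p := (z.val : ZMod p)

/-- Multiplication by `p` of a lift. -/
def phi (a : ZMod p) : ZMod (p ^ 2) := (p : ZMod (p ^ 2)) * ((a.val : ℕ) : ZMod (p ^ 2))

/-- Division by `p`. -/
def tz (z : ZMod (p ^ 2)) : ZMod p := ((z.val / p : ℕ) : ZMod p)

open Classical in
/-- Canonical representative of square class. -/
noncomputable def dRep (ε a : ZMod p) : ZMod p :=
  if a = 0 then 0 else if IsSquare a then 1 else ε

variable [hp : Fact p.Prime]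

open Classical in
/-- Canonical form function. -/
noncomputable def canon (ε : ZMod p) (m : ZMod p × ZMod p × ZMod (p ^ 2)) :
    ZMod p × ZMod p × ZMod (p ^ 2) :=
  if red p m.2.2 ≠ 0 then
    (dRep p ε (m.1 - m.2.1 ^ 2 / (4 * red p m.2.2)), 0,
      if IsSquare (red p m.2.2) then 1 else ((ε.val : ℕ) : ZMod (p ^ 2)))
  else if m.2.1 ≠ 0 then (0, 1, 0)
  else (dRep p ε m.1, 0, phi p (dRep p ε (tz p m.2.2)))

instance : NeZero (p ^ 2) := ⟨pow_ne_zero 2 hp.out.ne_zero⟩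

/-- The reduction as a ring hom. -/
def redHom : ZMod (p ^ 2) →+* ZMod p := ZMod.castHom (dvd_pow_self p two_ne_zero) (ZMod p)

theorem red_eq (z : ZMod (p ^ 2)) : red p z = redHom p z := by
  rw [red, ZMod.natCast_val, redHom, ZMod.castHom_apply]

@[simp] theorem red_add (a b : ZMod (p ^ 2)) : red p (a + b) = red p a + red p b := by
  simp [red_eq]

@[simp] theorem red_sub (a b : ZMod (p ^ 2)) : red p (a - b) = red p a - red p b := by
  simp [red_eq]

@[simp] theorem red_mul (a b : ZMod (p ^ 2)) : red p (a * b) = red p a * red p b := by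
  simp [red_eq]

@[simp] theorem red_pow (a : ZMod (p ^ 2)) (n : ℕ) : red p (a ^ n) = red p a ^ n := by
  simp [red_eq]

@[simp] theorem red_one : red p (1 : ZMod (p ^ 2)) = 1 := by simp [red_eq]

@[simp] theorem red_zero : red p (0 : ZMod (p ^ 2)) = 0 := by simp [red_eq]

@[simp] theorem red_natCast (n : ℕ) : red p ((n : ℕ) : ZMod (p ^ 2)) = (n : ZMod p) := by
  rw [red_eq]; exact map_natCast _ n

@[simp] theorem red_p : red p ((p : ℕ) : ZMod (p ^ 2)) = 0 := by
  rw [red_natCast, ZMod.natCast_self]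

@[simp] theorem red_cast_val (a : ZMod p) : red p ((a.val : ℕ) : ZMod (p ^ 2)) = a := by
  rw [red_natCast, ZMod.natCast_zmod_val]

theorem isUnit_iff_red (z : ZMod (p ^ 2)) : IsUnit z ↔ red p z ≠ 0 := by
  conv_lhs => rw [← ZMod.natCast_zmod_val z]
  rw [ZMod.isUnit_iff_coprime, Nat.coprime_pow_right_iff two_pos,
    Nat.coprime_comm, hp.out.coprime_iff_not_dvd, red, Ne,
    ZMod.natCast_eq_zero_iff]

theorem red_unit_ne_zero (i : (ZMod (p ^ 2))ˣ) : red p (i : ZMod (p ^ 2)) ≠ 0 :=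
  (isUnit_iff_red p _).mp i.isUnit

theorem pp_eq_zero : (p : ZMod (p ^ 2)) * (p : ZMod (p ^ 2)) = 0 := by
  rw [← Nat.cast_mul, ZMod.natCast_eq_zero_iff, pow_two]

theorem p_mul_eq_phi_red (w : ZMod (p ^ 2)) :
    (p : ZMod (p ^ 2)) * w = phi p (red p w) := by
  conv_lhs => rw [← ZMod.natCast_zmod_val w, ← Nat.div_add_mod w.val p]
  rw [phi, red, ZMod.val_natCast]
  push_cast
  rw [mul_add, ← mul_assoc, pp_eq_zero, zero_mul, zero_add]

theorem tz_phi (a : ZMod p) : tz p (phi p a) = a := by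
  have h1 : p * a.val < p ^ 2 := by
    have := a.val_lt
    have := hp.out.pos
    nlinarith
  rw [tz, phi, ← Nat.cast_mul, ZMod.val_natCast, Nat.mod_eq_of_lt h1,
    Nat.mul_div_cancel_left _ hp.out.pos, ZMod.natCast_zmod_val]

@[simp] theorem red_phi (a : ZMod p) : red p (phi p a) = 0 := by
  rw [phi, red_mul, red_p, zero_mul]

@[simp] theorem phi_zero : phi p (0 : ZMod p) = 0 := by
  rw [phi, ZMod.val_zero, Nat.cast_zero, mul_zero]

theorem z_eq_phi_tz {z : ZMod (p ^ 2)} (h : red p z = 0) : z = phi p (tz p z) := by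
  have hd : p ∣ z.val := by rwa [red, ZMod.natCast_eq_zero_iff] at h
  have h1 : z.val / p < p := by
    rw [Nat.div_lt_iff_lt_mul hp.out.pos, ← pow_two]; exact z.val_lt
  conv_lhs => rw [← ZMod.natCast_zmod_val z, ← Nat.div_mul_cancel hd]
  rw [tz, phi, ZMod.val_natCast, Nat.mod_eq_of_lt h1, Nat.cast_mul, mul_comm]

section FieldLemmas

variable {p}

theorem two_ne_zero'' (hodd : Odd p) : (2 : ZMod p) ≠ 0 := by
  have h : ((2 : ℕ) : ZMod p) ≠ 0 := by
    rw [Ne, ZMod.natCast_eq_zero_iff]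
    intro h
    rcases (Nat.prime_dvd_prime_iff_eq hp.out Nat.prime_two).mp h with rfl
    exact (by decide : ¬ Odd 2) hodd
  simpa using h

theorem four_ne_zero' (hodd : Odd p) : (4 : ZMod p) ≠ 0 := by
  have h2 := two_ne_zero'' (p := p) hodd
  have : (2 : ZMod p) * 2 = 4 := by norm_num
  rw [← this]
  exact mul_ne_zero h2 h2

theorem exists_unit_sq_mul {a b : ZMod p} (ha : a ≠ 0) (hb : b ≠ 0)
    (h : IsSquare a ↔ IsSquare b) : ∃ u : (ZMod p)ˣ, (u : ZMod p) ^ 2 * a = b := by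
  classical
  by_cases hsa : IsSquare a
  · have hsb := h.mp hsa
    obtain ⟨s, hs⟩ := hsa
    obtain ⟨t, ht⟩ := hsb
    have hs0 : s ≠ 0 := fun h0 => ha (by rw [hs, h0, mul_zero])
    have ht0 : t ≠ 0 := fun h0 => hb (by rw [ht, h0, mul_zero])
    refine ⟨Units.mk0 (t / s) (div_ne_zero ht0 hs0), ?_⟩
    rw [Units.val_mk0, hs, ht]
    field_simp
  · have hsb : ¬IsSquare b := fun hh => hsa (h.mpr hh)
    have hab : IsSquare (a * b) := by
      have h1 : quadraticChar (ZMod p) (a * b) = 1 := by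
        rw [map_mul, quadraticChar_neg_one_iff_not_isSquare.mpr hsa,
          quadraticChar_neg_one_iff_not_isSquare.mpr hsb]
        ring
      exact (quadraticChar_one_iff_isSquare (mul_ne_zero ha hb)).mp h1
    obtain ⟨s, hs⟩ := hab
    have hs0 : s ≠ 0 := fun h0 => (mul_ne_zero ha hb) (by rw [hs, h0, mul_zero])
    refine ⟨Units.mk0 (s / a) (div_ne_zero hs0 ha), ?_⟩
    rw [Units.val_mk0]
    field_simp
    linear_combination (-1 : ZMod p) * hs

theorem isSquare_sq_mul_iff {u : ZMod p} (hu : u ≠ 0) (a : ZMod p) :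
    IsSquare (u ^ 2 * a) ↔ IsSquare a := by
  constructor
  · rintro ⟨s, hs⟩
    refine ⟨s / u, ?_⟩
    field_simp
    linear_combination hs
  · rintro ⟨s, hs⟩
    exact ⟨u * s, by rw [hs]; ring⟩

theorem dRep_zero (ε : ZMod p) : dRep p ε 0 = 0 := by simp [dRep]

theorem dRep_one (ε : ZMod p) : dRep p ε 1 = 1 := by
  rw [dRep, if_neg one_ne_zero, if_pos IsSquare.one]

theorem dRep_eps {ε : ZMod p} (hε : ¬IsSquare ε) : dRep p ε ε = ε := by
  have hε0 : ε ≠ 0 := fun h => hε (h ▸ IsSquare.zero)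
  rw [dRep, if_neg hε0, if_neg hε]

theorem dRep_cases (ε a : ZMod p) : dRep p ε a = 0 ∨ dRep p ε a = 1 ∨ dRep p ε a = ε := by
  rw [dRep]; split_ifs <;> simp

theorem dRep_sq_mul (ε : ZMod p) {u : ZMod p} (hu : u ≠ 0) (a : ZMod p) :
    dRep p ε (u ^ 2 * a) = dRep p ε a := by
  classical
  by_cases ha : a = 0
  · rw [ha, mul_zero]
  · have h1 : u ^ 2 * a ≠ 0 := mul_ne_zero (pow_ne_zero _ hu) ha
    rw [dRep, dRep, if_neg ha, if_neg h1]
    by_cases h3 : IsSquare a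
    · rw [if_pos ((isSquare_sq_mul_iff hu a).mpr h3), if_pos h3]
    · rw [if_neg (fun hh => h3 ((isSquare_sq_mul_iff hu a).mp hh)), if_neg h3]

theorem dRep_exists {ε : ZMod p} (hε : ¬IsSquare ε) (a : ZMod p) :
    ∃ u : (ZMod p)ˣ, (u : ZMod p) ^ 2 * a = dRep p ε a := by
  classical
  by_cases ha : a = 0
  · exact ⟨1, by rw [ha, dRep_zero, mul_zero]⟩
  · have hε0 : ε ≠ 0 := fun h => hε (h ▸ IsSquare.zero)
    by_cases hs : IsSquare a
    · rw [show dRep p ε a = 1 by rw [dRep, if_neg ha, if_pos hs]]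
      exact exists_unit_sq_mul ha one_ne_zero (iff_of_true hs IsSquare.one)
    · rw [show dRep p ε a = ε by rw [dRep, if_neg ha, if_neg hs]]
      exact exists_unit_sq_mul ha hε0 (iff_of_false hs hε)

end FieldLemmas

theorem phi_add (a b : ZMod p) : phi p a + phi p b = phi p (a + b) := by
  rw [phi, phi, ← mul_add, p_mul_eq_phi_red, red_add, red_cast_val, red_cast_val]

theorem mul_phi (w : ZMod (p ^ 2)) (a : ZMod p) : w * phi p a = phi p (red p w * a) := by
  have h1 : w * phi p a = (p : ZMod (p ^ 2)) * (w * ((a.val : ℕ) : ZMod (p ^ 2))) := by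
    rw [phi]; ring
  rw [h1, p_mul_eq_phi_red, red_mul, red_cast_val]

theorem sq_mul_lift (hodd : Odd p) {z w : ZMod (p ^ 2)} (hz : IsUnit z)
    (h : red p z = red p w) : ∃ v : (ZMod (p ^ 2))ˣ, (v : ZMod (p ^ 2)) ^ 2 * z = w := by
  have h2 : IsUnit (2 : ZMod (p ^ 2)) := by
    rw [isUnit_iff_red]
    have he : red p (2 : ZMod (p ^ 2)) = (2 : ZMod p) := by
      rw [show (2 : ZMod (p ^ 2)) = ((2 : ℕ) : ZMod (p ^ 2)) by norm_cast, red_natCast]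
      norm_cast
    rw [he]
    exact two_ne_zero'' hodd
  have h2z := h2.mul hz
  set α : ZMod (p ^ 2) := (((tz p (w - z)).val : ℕ) : ZMod (p ^ 2)) with hα
  have hwz : w - z = (p : ZMod (p ^ 2)) * α := by
    have h0 : red p (w - z) = 0 := by rw [red_sub, h, sub_self]
    have h1 := z_eq_phi_tz p h0
    rwa [phi] at h1
  set c : ZMod (p ^ 2) := α * ((h2z.unit⁻¹ : (ZMod (p ^ 2))ˣ) : ZMod (p ^ 2)) with hc
  have hv : IsUnit (1 + (p : ZMod (p ^ 2)) * c) := by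
    rw [isUnit_iff_red, red_add, red_mul, red_p, red_one, zero_mul, add_zero]
    exact one_ne_zero
  refine ⟨hv.unit, ?_⟩
  rw [IsUnit.unit_spec]
  have hinv : (2 * z) * ((h2z.unit⁻¹ : (ZMod (p ^ 2))ˣ) : ZMod (p ^ 2)) = 1 := by
    have hmi := Units.mul_inv h2z.unit
    rwa [IsUnit.unit_spec] at hmi
  calc (1 + (p : ZMod (p ^ 2)) * c) ^ 2 * z
      = z + (p : ZMod (p ^ 2)) * ((2 * z) * ((h2z.unit⁻¹ : (ZMod (p ^ 2))ˣ) : ZMod (p ^ 2)) * α)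
        + ((p : ZMod (p ^ 2)) * (p : ZMod (p ^ 2))) * (c ^ 2 * z) := by rw [hc]; ring
    _ = w := by rw [hinv, pp_eq_zero, zero_mul, add_zero, one_mul, ← hwz]; ring

theorem exists_unit_sq_mul2 (hodd : Odd p) {z w : ZMod (p ^ 2)}
    (hz : red p z ≠ 0) (hw : red p w ≠ 0)
    (hiff : IsSquare (red p z) ↔ IsSquare (red p w)) :
    ∃ i : (ZMod (p ^ 2))ˣ, (i : ZMod (p ^ 2)) ^ 2 * z = w := by
  obtain ⟨u, hu⟩ := exists_unit_sq_mul hz hw hiff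
  set U : ZMod (p ^ 2) := (((u : ZMod p).val : ℕ) : ZMod (p ^ 2)) with hU
  have hUu : IsUnit U := by
    rw [isUnit_iff_red, hU, red_cast_val]; exact u.ne_zero
  have hred : red p (U ^ 2 * z) = red p w := by
    rw [red_mul, red_pow, hU, red_cast_val, hu]
  obtain ⟨v, hv⟩ := sq_mul_lift p hodd ((hUu.pow 2).mul ((isUnit_iff_red p z).mpr hz)) hred
  refine ⟨v * hUu.unit, ?_⟩
  have hspec : ((hUu.unit : (ZMod (p ^ 2))ˣ) : ZMod (p ^ 2)) = U := hUu.unit_spec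
  rw [Units.val_mul, hspec, ← hv]
  ring

section Action

variable {ε : ZMod p}

theorem canon_caseA {m : ZMod p × ZMod p × ZMod (p ^ 2)} (hA : red p m.2.2 ≠ 0) :
    canon p ε m = (dRep p ε (m.1 - m.2.1 ^ 2 / (4 * red p m.2.2)), 0,
      if IsSquare (red p m.2.2) then 1 else ((ε.val : ℕ) : ZMod (p ^ 2))) := by
  rw [canon, if_pos hA]

theorem canon_caseB {m : ZMod p × ZMod p × ZMod (p ^ 2)} (h0 : red p m.2.2 = 0)
    (hy : m.2.1 ≠ 0) : canon p ε m = (0, 1, 0) := by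
  rw [canon, if_neg (not_not_intro h0), if_pos hy]

theorem canon_caseC {m : ZMod p × ZMod p × ZMod (p ^ 2)} (h0 : red p m.2.2 = 0)
    (hy : m.2.1 = 0) :
    canon p ε m = (dRep p ε m.1, 0, phi p (dRep p ε (tz p m.2.2))) := by
  rw [canon, if_neg (not_not_intro h0), if_neg (not_not_intro hy)]

theorem H4act_eq (l : (ZMod p)ˣ) (j k : ZMod p) (i : (ZMod (p ^ 2))ˣ)
    (x y : ZMod p) (z : ZMod (p ^ 2)) :
    H4act p l j k i (x, y, z) =
      ((l : ZMod p) ^ 2 * x + (l : ZMod p) * k * y + k ^ 2 * red p z,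
       red p (i : ZMod (p ^ 2)) * (l : ZMod p) * y
         + 2 * red p (i : ZMod (p ^ 2)) * k * red p z,
       (p : ZMod (p ^ 2)) * (i : ZMod (p ^ 2)) * ((j.val : ℕ) : ZMod (p ^ 2))
         * ((y.val : ℕ) : ZMod (p ^ 2)) + (i : ZMod (p ^ 2)) ^ 2 * z) := rfl

theorem canon_act (hodd : Odd p) (hε : ¬IsSquare ε)
    (l : (ZMod p)ˣ) (j k : ZMod p) (i : (ZMod (p ^ 2))ˣ)
    (m : ZMod p × ZMod p × ZMod (p ^ 2)) :
    canon p ε (H4act p l j k i m) = canon p ε m := by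
  obtain ⟨x, y, z⟩ := m
  have hL : (l : ZMod p) ≠ 0 := l.ne_zero
  have hib : red p (i : ZMod (p ^ 2)) ≠ 0 := red_unit_ne_zero p i
  have h2 : (2 : ZMod p) ≠ 0 := two_ne_zero'' hodd
  have h4 : (4 : ZMod p) ≠ 0 := four_ne_zero' hodd
  rw [H4act_eq]
  have hz' : red p ((p : ZMod (p ^ 2)) * (i : ZMod (p ^ 2)) * ((j.val : ℕ) : ZMod (p ^ 2))
      * ((y.val : ℕ) : ZMod (p ^ 2)) + (i : ZMod (p ^ 2)) ^ 2 * z)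
      = red p (i : ZMod (p ^ 2)) ^ 2 * red p z := by
    simp
  by_cases hA : red p z ≠ 0
  · have hA' : red p (i : ZMod (p ^ 2)) ^ 2 * red p z ≠ 0 :=
      mul_ne_zero (pow_ne_zero _ hib) hA
    rw [canon_caseA p (by rw [hz']; exact hA'), canon_caseA p hA]
    simp only [Prod.mk.injEq]
    refine ⟨?_, trivial, ?_⟩
    · rw [hz']
      have hD : ((l : ZMod p) ^ 2 * x + (l : ZMod p) * k * y + k ^ 2 * red p z)
          - (red p (i : ZMod (p ^ 2)) * (l : ZMod p) * y
            + 2 * red p (i : ZMod (p ^ 2)) * k * red p z) ^ 2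
            / (4 * (red p (i : ZMod (p ^ 2)) ^ 2 * red p z))
          = (l : ZMod p) ^ 2 * (x - y ^ 2 / (4 * red p z)) := by
        field_simp
        ring
      rw [hD, dRep_sq_mul ε hL]
    · rw [hz']
      by_cases hs : IsSquare (red p z)
      · rw [if_pos ((isSquare_sq_mul_iff hib _).mpr hs), if_pos hs]
      · rw [if_neg (fun hh => hs ((isSquare_sq_mul_iff hib _).mp hh)), if_neg hs]
  · push_neg at hA
    have hz'0 : red p ((p : ZMod (p ^ 2)) * (i : ZMod (p ^ 2)) * ((j.val : ℕ) : ZMod (p ^ 2))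
        * ((y.val : ℕ) : ZMod (p ^ 2)) + (i : ZMod (p ^ 2)) ^ 2 * z) = 0 := by
      rw [hz', hA, mul_zero]
    by_cases hy : y = 0
    · rw [canon_caseC p hz'0 (by rw [hy, hA]; ring), canon_caseC p hA hy]
      simp only [Prod.mk.injEq]
      refine ⟨?_, trivial, ?_⟩
      · rw [hy, hA]
        have e1 : (l : ZMod p) ^ 2 * x + (l : ZMod p) * k * 0 + k ^ 2 * 0
            = (l : ZMod p) ^ 2 * x := by ring
        rw [e1, dRep_sq_mul ε hL]
      · rw [hy, ZMod.val_zero, Nat.cast_zero, mul_zero, zero_add]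
        have e3 : (i : ZMod (p ^ 2)) ^ 2 * z
            = phi p (red p (i : ZMod (p ^ 2)) ^ 2 * tz p z) := by
          conv_lhs => rw [z_eq_phi_tz p hA]
          rw [mul_phi, red_pow]
        rw [e3, tz_phi, dRep_sq_mul ε hib]
    · rw [canon_caseB p hz'0 (by
        rw [hA]
        simp only [mul_zero, add_zero]
        exact mul_ne_zero (mul_ne_zero hib hL) hy), canon_caseB p hA hy]

theorem canon_reachable (hodd : Odd p) (hε : ¬IsSquare ε)
    (m : ZMod p × ZMod p × ZMod (p ^ 2)) :
    ∃ (l : (ZMod p)ˣ) (j k : ZMod p) (i : (ZMod (p ^ 2))ˣ),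
      canon p ε m = H4act p l j k i m := by
  classical
  obtain ⟨x, y, z⟩ := m
  have h2 : (2 : ZMod p) ≠ 0 := two_ne_zero'' hodd
  have h4 : (4 : ZMod p) ≠ 0 := four_ne_zero' hodd
  have hε0 : ε ≠ 0 := fun h => hε (h ▸ IsSquare.zero)
  by_cases hA : red p z ≠ 0
  · obtain ⟨l, hl⟩ := dRep_exists hε (x - y ^ 2 / (4 * red p z))
    set w : ZMod (p ^ 2) :=
      if IsSquare (red p z) then 1 else ((ε.val : ℕ) : ZMod (p ^ 2)) with hwdef
    have hw1 : red p w ≠ 0 := by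
      rw [hwdef]; split_ifs with hs
      · rw [red_one]; exact one_ne_zero
      · rw [red_cast_val]; exact hε0
    have hw2 : IsSquare (red p z) ↔ IsSquare (red p w) := by
      rw [hwdef]; split_ifs with hs
      · rw [red_one]; exact iff_of_true hs IsSquare.one
      · rw [red_cast_val]; exact iff_of_false hs hε
    obtain ⟨i, hi⟩ := exists_unit_sq_mul2 p hodd hA hw1 hw2
    refine ⟨l, 0, -((l : ZMod p) * y) / (2 * red p z), i, ?_⟩
    rw [canon_caseA p hA, H4act_eq]
    simp only [Prod.mk.injEq]
    refine ⟨?_, ?_, ?_⟩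
    · rw [← hl]
      field_simp
      ring
    · field_simp
      ring
    · rw [ZMod.val_zero, Nat.cast_zero, mul_zero, zero_mul, zero_add, hi]
  · push_neg at hA
    by_cases hy : y = 0
    · obtain ⟨l, hl⟩ := dRep_exists hε x
      obtain ⟨u, hu⟩ := dRep_exists hε (tz p z)
      have hIu : IsUnit ((((u : ZMod p).val : ℕ)) : ZMod (p ^ 2)) := by
        rw [isUnit_iff_red, red_cast_val]; exact u.ne_zero
      refine ⟨l, 0, 0, hIu.unit, ?_⟩
      rw [canon_caseC p hA hy, H4act_eq]
      simp only [Prod.mk.injEq]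
      have hspec : ((hIu.unit : (ZMod (p ^ 2))ˣ) : ZMod (p ^ 2))
          = (((u : ZMod p).val : ℕ) : ZMod (p ^ 2)) := hIu.unit_spec
      refine ⟨?_, ?_, ?_⟩
      · rw [← hl]; ring
      · rw [hy]; ring
      · rw [ZMod.val_zero, Nat.cast_zero, mul_zero, zero_mul, zero_add, ← hu]
        conv_rhs => rw [z_eq_phi_tz p hA]
        rw [mul_phi, red_pow, hspec, red_cast_val]
    · refine ⟨(Units.mk0 y hy)⁻¹, -(tz p z) * y⁻¹, -(x * y⁻¹ * y⁻¹), 1, ?_⟩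
      rw [canon_caseB p hA hy, H4act_eq]
      have hLinv : (((Units.mk0 y hy)⁻¹ : (ZMod p)ˣ) : ZMod p) = y⁻¹ := by
        rw [Units.val_inv_eq_inv_val, Units.val_mk0]
      simp only [Prod.mk.injEq]
      refine ⟨?_, ?_, ?_⟩
      · rw [hLinv, hA]
        field_simp
        ring
      · rw [hLinv, hA, Units.val_one]
        field_simp
        rw [red_one]; ring
      · simp only [Units.val_one, one_pow, mul_one, one_mul]
        rw [mul_assoc, p_mul_eq_phi_red, red_mul, red_cast_val, red_cast_val]
        conv_rhs => rw [z_eq_phi_tz p hA]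
        rw [phi_add, tz_phi]
        have e0 : -(tz p z) * y⁻¹ * y + tz p z = 0 := by
          field_simp
          ring
        rw [e0, phi_zero]

end Action

/-- The sixteen orbit representatives. -/
def reps (ε : ZMod p) : Finset (ZMod p × ZMod p × ZMod (p ^ 2)) :=
  (({0, 1, ε} : Finset (ZMod p)) ×ˢ (({0} : Finset (ZMod p)) ×ˢ
      (({1, ((ε.val : ℕ) : ZMod (p ^ 2))} : Finset (ZMod (p ^ 2))) ∪
        ({0, 1, ε} : Finset (ZMod p)).image (phi p)))) ∪ {(0, 1, 0)}

theorem phi_inj : Function.Injective (phi p) := fun a b h => by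
  rw [← tz_phi p a, h, tz_phi]

theorem reps_card {ε : ZMod p} (hε : ¬IsSquare ε) : (reps p ε).card = 16 := by
  have hε0 : ε ≠ 0 := fun h => hε (h ▸ IsSquare.zero)
  have hε1 : ε ≠ 1 := fun h => hε (h ▸ IsSquare.one)
  have hS3 : ({0, 1, ε} : Finset (ZMod p)).card = 3 := by
    rw [Finset.card_insert_of_notMem (by simp [zero_ne_one, Ne.symm hε0]),
      Finset.card_insert_of_notMem (by simp [Ne.symm hε1]), Finset.card_singleton]
  have h1e : (1 : ZMod (p ^ 2)) ≠ ((ε.val : ℕ) : ZMod (p ^ 2)) := by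
    intro h
    have h2 := congrArg (red p) h
    rw [red_one, red_cast_val] at h2
    exact hε1 h2.symm
  have hS2 : ({1, ((ε.val : ℕ) : ZMod (p ^ 2))} : Finset (ZMod (p ^ 2))).card = 2 := by
    rw [Finset.card_insert_of_notMem (by rw [Finset.mem_singleton]; exact h1e), Finset.card_singleton]
  have hImg : (({0, 1, ε} : Finset (ZMod p)).image (phi p)).card = 3 := by
    rw [Finset.card_image_of_injective _ (phi_inj p), hS3]
  have hDisj : Disjoint ({1, ((ε.val : ℕ) : ZMod (p ^ 2))} : Finset (ZMod (p ^ 2)))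
      (({0, 1, ε} : Finset (ZMod p)).image (phi p)) := by
    rw [Finset.disjoint_left]
    intro a ha hb
    obtain ⟨b, _, rfl⟩ := Finset.mem_image.mp hb
    have h0 := red_phi p b
    simp only [Finset.mem_insert, Finset.mem_singleton] at ha
    rcases ha with ha | ha
    · rw [ha, red_one] at h0; exact one_ne_zero h0
    · rw [ha, red_cast_val] at h0; exact hε0 h0
  have hne : ((0, 1, 0) : ZMod p × ZMod p × ZMod (p ^ 2)) ∉
      (({0, 1, ε} : Finset (ZMod p)) ×ˢ (({0} : Finset (ZMod p)) ×ˢ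
        (({1, ((ε.val : ℕ) : ZMod (p ^ 2))} : Finset (ZMod (p ^ 2))) ∪
          ({0, 1, ε} : Finset (ZMod p)).image (phi p)))) := by
    intro h
    rw [Finset.mem_product] at h
    have h2 := h.2
    rw [Finset.mem_product] at h2
    have := Finset.mem_singleton.mp h2.1
    exact one_ne_zero this
  rw [reps, Finset.card_union_of_disjoint (Finset.disjoint_singleton_right.mpr hne),
    Finset.card_product, Finset.card_product, Finset.card_union_of_disjoint hDisj,
    hS3, hS2, hImg, Finset.card_singleton, Finset.card_singleton]

theorem canon_mem (ε : ZMod p) (m : ZMod p × ZMod p × ZMod (p ^ 2)) :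
    canon p ε m ∈ reps p ε := by
  have hmem : ∀ a : ZMod p, dRep p ε a ∈ ({0, 1, ε} : Finset (ZMod p)) := by
    intro a
    rcases dRep_cases ε a with h | h | h <;> rw [h] <;> simp
  by_cases hA : red p m.2.2 ≠ 0
  · rw [canon_caseA p hA, reps]
    apply Finset.mem_union_left
    rw [Finset.mem_product]
    refine ⟨hmem _, ?_⟩
    rw [Finset.mem_product]
    refine ⟨Finset.mem_singleton_self 0, Finset.mem_union_left _ ?_⟩
    split_ifs <;> simp
  · push_neg at hA
    by_cases hy : m.2.1 ≠ 0
    · rw [canon_caseB p hA hy, reps]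
      exact Finset.mem_union_right _ (Finset.mem_singleton_self _)
    · push_neg at hy
      rw [canon_caseC p hA hy, reps]
      apply Finset.mem_union_left
      rw [Finset.mem_product]
      refine ⟨hmem _, ?_⟩
      rw [Finset.mem_product]
      exact ⟨Finset.mem_singleton_self 0,
        Finset.mem_union_right _ (Finset.mem_image_of_mem _ (hmem _))⟩

theorem canon_fix {ε : ZMod p} (hε : ¬IsSquare ε)
    {w : ZMod p × ZMod p × ZMod (p ^ 2)} (hw : w ∈ reps p ε) : canon p ε w = w := by
  have hε0 : ε ≠ 0 := fun h => hε (h ▸ IsSquare.zero)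
  have hε1 : ε ≠ 1 := fun h => hε (h ▸ IsSquare.one)
  have hdr : ∀ a ∈ ({0, 1, ε} : Finset (ZMod p)), dRep p ε a = a := by
    intro a ha
    simp only [Finset.mem_insert, Finset.mem_singleton] at ha
    rcases ha with rfl | rfl | rfl
    · exact dRep_zero ε
    · exact dRep_one ε
    · exact dRep_eps hε
  rw [reps, Finset.mem_union] at hw
  obtain ⟨a, b, c⟩ := w
  rcases hw with hw | hw
  · rw [Finset.mem_product] at hw
    obtain ⟨h1, h2⟩ := hw
    rw [Finset.mem_product] at h2
    obtain ⟨h2, h3⟩ := h2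
    rw [Finset.mem_singleton] at h2
    subst h2
    rw [Finset.mem_union] at h3
    rcases h3 with h3 | h3
    · simp only [Finset.mem_insert, Finset.mem_singleton] at h3
      have hc : red p c ≠ 0 ∧ ((if IsSquare (red p c) then (1 : ZMod (p ^ 2))
          else ((ε.val : ℕ) : ZMod (p ^ 2))) = c) := by
        rcases h3 with rfl | rfl
        · exact ⟨by rw [red_one]; exact one_ne_zero, by rw [red_one, if_pos IsSquare.one]⟩
        · exact ⟨by rw [red_cast_val]; exact hε0, by rw [red_cast_val, if_neg hε]⟩
      rw [canon_caseA p hc.1]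
      simp only [Prod.mk.injEq]
      have hD : a - (0 : ZMod p) ^ 2 / (4 * red p c) = a := by
        rw [zero_pow (by norm_num : (2 : ℕ) ≠ 0), zero_div, sub_zero]
      exact ⟨by rw [hD]; exact hdr a h1, trivial, hc.2⟩
    · obtain ⟨b, hb, rfl⟩ := Finset.mem_image.mp h3
      rw [canon_caseC p (red_phi p b) rfl]
      simp only [Prod.mk.injEq]
      exact ⟨hdr a h1, trivial, by rw [tz_phi, hdr b hb]⟩
  · rw [Finset.mem_singleton] at hw
    rw [hw]
    have h1 : ((0 : ZMod p), (1 : ZMod p), (0 : ZMod (p ^ 2))).2.2 = 0 := rfl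
    rw [canon_caseB p (by rw [h1]; exact red_zero p) one_ne_zero]

end H4aux

/-- Let `p` be an odd prime.  The above action of
`Γ = (Z/p)ˣ × Z/p × Z/p × (Z/p²)ˣ` on `Z/p ⊕ Z/p ⊕ Z/p²` has exactly `16`
orbits. -/
theorem H4_Zp2xZp_orbit_count (p : ℕ) (hp : p.Prime) (hodd : Odd p) :
    ∃ s : Finset (ZMod p × ZMod p × ZMod (p ^ 2)), s.card = 16 ∧
      ∀ m : ZMod p × ZMod p × ZMod (p ^ 2), ∃! w, w ∈ s ∧
        ∃ (l : (ZMod p)ˣ) (j k : ZMod p) (i : (ZMod (p ^ 2))ˣ),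
          w = H4act p l j k i m := by
  haveI : Fact p.Prime := ⟨hp⟩
  have hp2 : ringChar (ZMod p) ≠ 2 := by
    rw [ZMod.ringChar_zmod_n]
    rintro rfl
    exact (by decide : ¬Odd 2) hodd
  obtain ⟨ε, hε⟩ := FiniteField.exists_nonsquare (F := ZMod p) hp2
  refine ⟨H4aux.reps p ε, H4aux.reps_card p hε, fun m => ?_⟩
  refine ⟨H4aux.canon p ε m, ⟨H4aux.canon_mem p ε m, ?_⟩, ?_⟩
  · obtain ⟨l, j, k, i, h⟩ := H4aux.canon_reachable p hodd hε m
    exact ⟨l, j, k, i, h⟩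
  · rintro w ⟨hws, l, j, k, i, rfl⟩
    calc H4act p l j k i m
        = H4aux.canon p ε (H4act p l j k i m) := (H4aux.canon_fix p hε hws).symm
      _ = H4aux.canon p ε m := H4aux.canon_act p hodd hε l j k i m
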